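/- Let β : ℝ → ℝ be real-analytic on an open interval containing 0 with β(0) = 0 and β'(0) = 0, and let C ∈ ℝ. Define F(r) = ∫₀^r (e^{2β(s)} - 1)/s² ds (the integrand extends continuously to s = 0 since β vanishes to second order) and κ(r) = -log(1 - r·F(r) - r·C) + β(r). Then for every r ≠ 0 in a neighbourhood of 0 on which 1 - r·F(r) - r·C > 0, the function M(r) := β''(r) - (β'(r))² + (2/r)·β'(r) - κ''(r) + (κ'(r))² vanishes: M(r) = 0. -/

import Mathlib

open Set MeasureTheory Filter
open scoped Interval

set_option maxHeartbeats 1600000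

/-- For `β` real-analytic near `0` with `β(0) = β'(0) = 0`,
`F(r) = ∫₀^r (e^{2β(s)}-1)/s² ds` and `κ(r) = -log(1 - r·F(r) - r·C) + β(r)`, the
quantity `M(r) = β'' - (β')² + (2/r)·β' - κ'' + (κ')²` vanishes for every `r ≠ 0`
near `0` at which `1 - r·F(r) - r·C > 0`. -/
theorem stmt_5 (a b : ℝ) (ha : a < 0) (hb : 0 < b)
    (β : ℝ → ℝ) (hβ : AnalyticOnNhd ℝ β (Set.Ioo a b))
    (hβ0 : β 0 = 0) (hβ'0 : deriv β 0 = 0) (C : ℝ)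
    (F : ℝ → ℝ) (hF : ∀ r : ℝ, F r = ∫ s in (0:ℝ)..r, (Real.exp (2 * β s) - 1) / s ^ 2)
    (κ : ℝ → ℝ) (hκ : ∀ r : ℝ, κ r = -Real.log (1 - r * F r - r * C) + β r) :
    ∀ᶠ r in nhds (0:ℝ), r ≠ 0 → 0 < 1 - r * F r - r * C →
      deriv (deriv β) r - (deriv β r) ^ 2 + (2 / r) * deriv β r
        - deriv (deriv κ) r + (deriv κ r) ^ 2 = 0 := by
  -- a small closed interval around 0 inside (a,b)
  set ε : ℝ := min (-a / 2) (b / 2) with hεdef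
  have hε0 : 0 < ε := lt_min (by linarith) (by linarith)
  have hIcc : Icc (-ε) ε ⊆ Ioo a b := by
    intro t ht
    have h1 : ε ≤ -a / 2 := min_le_left _ _
    have h2 : ε ≤ b / 2 := min_le_right _ _
    exact ⟨by cases ht with | intro h1' h2' => nlinarith, by nlinarith [ht.2]⟩
  have hmemε : ∀ x : ℝ, |x| ≤ ε → x ∈ Ioo a b := fun x hx =>
    hIcc ⟨(abs_le.mp hx).1, (abs_le.mp hx).2⟩
  -- differentiability facts from analyticity
  have hβ'an : AnalyticOnNhd ℝ (deriv β) (Ioo a b) := hβ.deriv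
  have hβ''an : AnalyticOnNhd ℝ (deriv (deriv β)) (Ioo a b) := hβ'an.deriv
  have hβdiff : ∀ x ∈ Ioo a b, HasDerivAt β (deriv β x) x := fun x hx =>
    ((hβ x hx).differentiableAt).hasDerivAt
  have hβ'diff : ∀ x ∈ Ioo a b, HasDerivAt (deriv β) (deriv (deriv β) x) x := fun x hx =>
    ((hβ'an x hx).differentiableAt).hasDerivAt
  have hβcont : ∀ x ∈ Ioo a b, ContinuousAt β x := fun x hx => (hβ x hx).continuousAt
  -- bound on second derivative on the compact interval
  obtain ⟨C2, hC2⟩ :=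
    (isCompact_Icc (a := -ε) (b := ε)).exists_bound_of_continuousOn
      (hβ''an.continuousOn.mono hIcc)
  have h0mem : (0:ℝ) ∈ Icc (-ε) ε := ⟨by linarith, hε0.le⟩
  have hC2nonneg : 0 ≤ C2 := le_trans (norm_nonneg _) (hC2 0 h0mem)
  -- linear bound on β'
  have hb1 : ∀ s : ℝ, |s| ≤ ε → |deriv β s| ≤ C2 * |s| := by
    intro s hs
    have hsmem : s ∈ Icc (-ε) ε := ⟨(abs_le.mp hs).1, (abs_le.mp hs).2⟩
    have key := Convex.norm_image_sub_le_of_norm_deriv_le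
      (f := deriv β) (s := Icc (-ε) ε)
      (fun x hx => (hβ'an x (hIcc hx)).differentiableAt)
      (fun x hx => hC2 x hx) (convex_Icc _ _) h0mem hsmem
    simpa [hβ'0, Real.norm_eq_abs] using key
  -- quadratic bound on β
  have hquad : ∀ s : ℝ, |s| ≤ ε → |β s| ≤ C2 * s ^ 2 := by
    intro s hs
    have hsub : uIcc 0 s ⊆ Icc (-ε) ε := by
      intro t ht
      have habs : |t| ≤ |s| := by
        rcases Set.mem_uIcc.mp ht with ⟨h1, h2⟩ | ⟨h1, h2⟩ <;>
          exact abs_le.mpr ⟨by nlinarith [neg_abs_le s, le_abs_self s],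
            by nlinarith [neg_abs_le s, le_abs_self s]⟩
      exact ⟨by nlinarith [(abs_le.mp (habs.trans hs)).1],
        by nlinarith [(abs_le.mp (habs.trans hs)).2]⟩
    have key := Convex.norm_image_sub_le_of_norm_deriv_le
      (f := β) (s := uIcc 0 s)
      (fun x hx => (hβ x (hIcc (hsub hx))).differentiableAt)
      (fun x hx => by
        have hxε : |x| ≤ ε := abs_le.mpr ⟨(hsub hx).1, (hsub hx).2⟩
        have h1 := hb1 x hxε
        have h2 : |x| ≤ |s| := by
          rcases Set.mem_uIcc.mp hx with ⟨u1, u2⟩ | ⟨u1, u2⟩ <;>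
            exact abs_le.mpr ⟨by nlinarith [neg_abs_le s, le_abs_self s],
              by nlinarith [neg_abs_le s, le_abs_self s]⟩
        calc ‖deriv β x‖ ≤ C2 * |x| := h1
          _ ≤ C2 * |s| := by nlinarith
        ) (convex_uIcc 0 s) Set.left_mem_uIcc Set.right_mem_uIcc
    have : |β s - β 0| ≤ C2 * |s| * |s - 0| := key
    rw [hβ0, sub_zero, sub_zero] at this
    calc |β s| ≤ C2 * |s| * |s| := this
      _ = C2 * s ^ 2 := by rw [mul_assoc, abs_mul_abs_self, sq]
  -- choose δ so that |β| ≤ 1/4 on [-δ, δ]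
  obtain ⟨δ', hδ'pos, hδ'⟩ := Metric.continuousAt_iff.mp (hβcont 0 ⟨ha, hb⟩) (1/4) (by norm_num)
  set δ : ℝ := min (δ' / 2) ε with hδdef
  have hδpos : 0 < δ := lt_min (by linarith) hε0
  have hδε : δ ≤ ε := min_le_right _ _
  have hβsmall : ∀ s : ℝ, |s| ≤ δ → |β s| ≤ 1 / 4 := by
    intro s hs
    have : dist s 0 < δ' := by
      rw [Real.dist_eq, sub_zero]
      calc |s| ≤ δ := hs
        _ ≤ δ' / 2 := min_le_left _ _
        _ < δ' := by linarith
    have := hδ' this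
    rw [Real.dist_eq, hβ0, sub_zero] at this
    linarith
  -- bound on the integrand
  have hboundh : ∀ s : ℝ, |s| ≤ δ → |(Real.exp (2 * β s) - 1) / s ^ 2| ≤ 4 * C2 := by
    intro s hs
    by_cases h0 : s = 0
    · simp [h0, hβ0]
      positivity
    · have h1 : |2 * β s| ≤ 1 := by
        rw [abs_mul]
        have := hβsmall s hs
        rw [abs_two]
        linarith
      have h2 : |Real.exp (2 * β s) - 1| ≤ 2 * |2 * β s| := Real.abs_exp_sub_one_le h1
      have h3 : |β s| ≤ C2 * s ^ 2 := hquad s (hs.trans hδε)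
      have hs2 : (0:ℝ) < s ^ 2 := by positivity
      rw [abs_div, abs_pow, sq_abs]
      rw [div_le_iff₀ hs2]
      have : |2 * β s| = 2 * |β s| := by rw [abs_mul, abs_two]
      nlinarith
  -- interval integrability of the integrand
  have hint : ∀ x : ℝ, |x| ≤ δ → IntervalIntegrable
      (fun s => (Real.exp (2 * β s) - 1) / s ^ 2) volume 0 x := by
    intro x hx
    rw [intervalIntegrable_iff]
    have hsubx : ∀ t ∈ Ι (0:ℝ) x, |t| ≤ |x| := by
      intro t ht
      rcases Set.mem_uIoc.mp ht with ⟨h1, h2⟩ | ⟨h1, h2⟩ <;>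
        exact abs_le.mpr ⟨by nlinarith [neg_abs_le x, le_abs_self x],
          by nlinarith [neg_abs_le x, le_abs_self x]⟩
    have hcontOn : ContinuousOn (fun s => (Real.exp (2 * β s) - 1) / s ^ 2)
        (Ι (0:ℝ) x \ {0}) := by
      intro t ht
      have ht0 : t ≠ 0 := ht.2
      have htab : t ∈ Ioo a b := hmemε t (((hsubx t ht.1).trans hx).trans hδε)
      have hca : ContinuousAt (fun s => (Real.exp (2 * β s) - 1) / s ^ 2) t := by
        exact ((Real.continuous_exp.continuousAt.comp
          (continuousAt_const.mul (hβcont t htab))).sub continuousAt_const).div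
          ((continuous_pow 2).continuousAt) (pow_ne_zero 2 ht0)
      exact hca.continuousWithinAt
    have hmeasset : MeasurableSet (Ι (0:ℝ) x \ {0}) :=
      measurableSet_uIoc.diff (measurableSet_singleton 0)
    have hrestr : volume.restrict (Ι (0:ℝ) x) = volume.restrict (Ι (0:ℝ) x \ {0}) :=
      (Measure.restrict_congr_set (diff_null_ae_eq_self (Real.volume_singleton))).symm
    refine ⟨?_, ?_⟩
    · rw [hrestr]
      exact hcontOn.aestronglyMeasurable hmeasset
    · refine HasFiniteIntegral.restrict_of_bounded (C := 4 * C2) ?_ ?_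
      · exact measure_Ioc_lt_top
      · refine (ae_restrict_iff' measurableSet_uIoc).mpr (ae_of_all _ fun t ht => ?_)
        rw [Real.norm_eq_abs]
        exact hboundh t ((hsubx t ht).trans hx)
  -- FTC: derivative of F on the punctured interval
  have hFdef : F = fun u => ∫ s in (0:ℝ)..u, (Real.exp (2 * β s) - 1) / s ^ 2 := funext hF
  have hopen : IsOpen (Ioo a b \ {0}) := isOpen_Ioo.sdiff isClosed_singleton
  have hhc : ∀ t ∈ Ioo a b \ {(0:ℝ)}, ContinuousAt
      (fun s => (Real.exp (2 * β s) - 1) / s ^ 2) t := by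
    intro t ht
    exact ((Real.continuous_exp.continuousAt.comp
      (continuousAt_const.mul (hβcont t ht.1))).sub continuousAt_const).div
      ((continuous_pow 2).continuousAt) (pow_ne_zero 2 ht.2)
  have hcontOn' : ContinuousOn (fun s => (Real.exp (2 * β s) - 1) / s ^ 2)
      (Ioo a b \ {0}) := fun t ht => (hhc t ht).continuousWithinAt
  have hFTC : ∀ x : ℝ, x ≠ 0 → |x| < δ →
      HasDerivAt F ((Real.exp (2 * β x) - 1) / x ^ 2) x := by
    intro x hx0 hxδ
    have hxab : x ∈ Ioo a b := hmemε x (hxδ.le.trans hδε)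
    rw [hFdef]
    exact intervalIntegral.integral_hasDerivAt_right (hint x hxδ.le)
      (hcontOn'.stronglyMeasurableAtFilter hopen x ⟨hxab, hx0⟩)
      (hhc x ⟨hxab, hx0⟩)
  -- derivative of G(x) = 1 - x F x - x C
  have hGd : ∀ x : ℝ, x ≠ 0 → |x| < δ →
      HasDerivAt (fun y => 1 - y * F y - y * C)
        (-(F x + x * ((Real.exp (2 * β x) - 1) / x ^ 2)) - C) x := by
    intro x hx0 hxδ
    have h1 : HasDerivAt (fun y : ℝ => y * F y)
        (1 * F x + x * ((Real.exp (2 * β x) - 1) / x ^ 2)) x :=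
      (hasDerivAt_id x).mul (hFTC x hx0 hxδ)
    have h2 : HasDerivAt (fun y : ℝ => y * C) C x := by
      simpa using (hasDerivAt_id x).mul_const C
    have h3 := ((hasDerivAt_const x (1:ℝ)).sub h1).sub h2
    exact h3.congr_deriv (by ring)
  -- derivative of κ on the good set
  have hκdef : κ = fun y => -Real.log (1 - y * F y - y * C) + β y := funext hκ
  have hκd : ∀ x : ℝ, x ≠ 0 → |x| < δ → 0 < 1 - x * F x - x * C →
      HasDerivAt κ
        (-((-(F x + x * ((Real.exp (2 * β x) - 1) / x ^ 2)) - C) /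
            (1 - x * F x - x * C)) + deriv β x) x := by
    intro x hx0 hxδ hGx
    have hxab : x ∈ Ioo a b := hmemε x (hxδ.le.trans hδε)
    rw [hκdef]
    have hlog := (hGd x hx0 hxδ).log (ne_of_gt hGx)
    exact hlog.neg.add (hβdiff x hxab)
  -- the main eventual statement
  have hball : ∀ᶠ r in nhds (0:ℝ), |r| < δ := by
    filter_upwards [Ioo_mem_nhds (neg_lt_zero.mpr hδpos) hδpos] with r hr
    exact abs_lt.mpr ⟨hr.1, hr.2⟩
  filter_upwards [hball] with r hrδ hr0 hGr
  have hrab : r ∈ Ioo a b := hmemε r (hrδ.le.trans hδε)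
  have hFr := hFTC r hr0 hrδ
  have hGder := hGd r hr0 hrδ
  -- the good set is a neighbourhood of r
  have hU : ∀ᶠ x in nhds r, x ≠ 0 ∧ |x| < δ ∧ 0 < 1 - x * F x - x * C := by
    have h1 : ∀ᶠ x in nhds r, x ≠ 0 := eventually_ne_nhds hr0
    have h2 : ∀ᶠ x in nhds r, |x| < δ :=
      (continuous_abs.continuousAt (x := r)).eventually (eventually_lt_nhds hrδ)
    have h3 : ∀ᶠ x in nhds r, 0 < 1 - x * F x - x * C :=
      hGder.continuousAt.eventually (eventually_gt_nhds hGr)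
    filter_upwards [h1, h2, h3] with x hx1 hx2 hx3
    exact ⟨hx1, hx2, hx3⟩
  -- first derivatives
  have e1 : deriv κ r =
      -((-(F r + r * ((Real.exp (2 * β r) - 1) / r ^ 2)) - C) /
          (1 - r * F r - r * C)) + deriv β r := (hκd r hr0 hrδ hGr).deriv
  have hderivκ : deriv κ =ᶠ[nhds r] fun x =>
      -((-(F x + x * ((Real.exp (2 * β x) - 1) / x ^ 2)) - C) /
          (1 - x * F x - x * C)) + deriv β x :=
    hU.mono fun x hx => (hκd x hx.1 hx.2.1 hx.2.2).deriv
  -- derivative of the integrand at r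
  have hh'r : HasDerivAt (fun s => (Real.exp (2 * β s) - 1) / s ^ 2)
      ((Real.exp (2 * β r) * (2 * deriv β r) * r ^ 2 -
        (Real.exp (2 * β r) - 1) * (2 * r)) / (r ^ 2) ^ 2) r := by
    have h2β : HasDerivAt (fun s => 2 * β s) (2 * deriv β r) r :=
      (hβdiff r hrab).const_mul 2
    have hu : HasDerivAt (fun s => Real.exp (2 * β s) - 1)
        (Real.exp (2 * β r) * (2 * deriv β r)) r := h2β.exp.sub_const 1
    have hv : HasDerivAt (fun s : ℝ => s ^ 2) (2 * r) r := by
      simpa using hasDerivAt_pow 2 r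
    have := hu.div hv (pow_ne_zero 2 hr0)
    exact this
  -- derivative of the numerator N(x) = -(F x + x h x) - C at r
  have hNd : HasDerivAt (fun x => -(F x + x * ((Real.exp (2 * β x) - 1) / x ^ 2)) - C)
      (-((Real.exp (2 * β r) - 1) / r ^ 2 +
        (1 * ((Real.exp (2 * β r) - 1) / r ^ 2) +
          r * ((Real.exp (2 * β r) * (2 * deriv β r) * r ^ 2 -
            (Real.exp (2 * β r) - 1) * (2 * r)) / (r ^ 2) ^ 2)))) r :=
    ((hFr.add ((hasDerivAt_id r).mul hh'r)).neg).sub_const C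
  -- second derivative of κ at r
  have hK1d := ((hNd.div hGder (ne_of_gt hGr)).neg).add (hβ'diff r hrab)
  have e2 : deriv (deriv κ) r =
      -((-((Real.exp (2 * β r) - 1) / r ^ 2 +
          (1 * ((Real.exp (2 * β r) - 1) / r ^ 2) +
            r * ((Real.exp (2 * β r) * (2 * deriv β r) * r ^ 2 -
              (Real.exp (2 * β r) - 1) * (2 * r)) / (r ^ 2) ^ 2))) *
          (1 - r * F r - r * C) -
        (-(F r + r * ((Real.exp (2 * β r) - 1) / r ^ 2)) - C) *
          (-(F r + r * ((Real.exp (2 * β r) - 1) / r ^ 2)) - C)) /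
        (1 - r * F r - r * C) ^ 2) + deriv (deriv β) r := by
    rw [hderivκ.deriv_eq]
    exact hK1d.deriv
  rw [e1, e2]
  have hGne : (1 - r * F r - r * C) ≠ 0 := ne_of_gt hGr
  field_simp
  ring
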